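/- arXiv:1802.00289 — 4 statements merged into one kernel-verified Lean document; each statement's English description precedes it below -/
import Mathlib

section
/- Let A be a (not necessarily commutative) unital ring and let I be a two-sided ideal of A which is square-zero, i.e. a*b = 0 for all a, b ∈ I. Let ι be a type and let h : ι → ι → Aˣ be a family of units of A satisfying h i i = 1 and (h i j)*(h j i) = 1 for all i, j ∈ ι, and such that for all i, j, k ∈ ι the element s i j k := (h i j)*(h j k)*(h k i) − 1 (computed in A) belongs to I. Then for all indices i, j, k, l ∈ ι the following Čech 2-cocycle identity holds in A: (h i j)*(s j k l)*(h i j)⁻¹ − s i k l + s i j l − s i j k = 0. -/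
/-- Čech 2-cocycle identity for the obstruction cochain attached to a square-zero
ideal `I` and a family of units `h` whose "coboundary defect" `s i j k` lies in `I`. -/
theorem cech_two_cocycle_identity
    {A : Type*} [Ring A] (I : TwoSidedIdeal A)
    (hI : ∀ a b : A, a ∈ I → b ∈ I → a * b = 0)
    {ι : Type*} (h : ι → ι → Aˣ)
    (hrefl : ∀ i, h i i = 1)
    (hsym : ∀ i j, h i j * h j i = 1)
    (hs : ∀ i j k, ((h i j : A) * (h j k : A) * (h k i : A) - 1) ∈ I) :
    ∀ i j k l : ι,
      (h i j : A) * ((h j k : A) * (h k l : A) * (h l j : A) - 1) * ((h i j)⁻¹ : Aˣ)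
        - ((h i k : A) * (h k l : A) * (h l i : A) - 1)
        + ((h i j : A) * (h j l : A) * (h l i : A) - 1)
        - ((h i j : A) * (h j k : A) * (h k i : A) - 1) = 0 := by
  intro i j k l
  have hinv : ∀ p q, (h p q)⁻¹ = h q p := fun p q =>
    inv_eq_of_mul_eq_one_right (hsym p q)
  set a := (h i j : A) * (h j k : A) * (h k i : A) - 1 with ha
  set b := (h i k : A) * (h k l : A) * (h l i : A) - 1 with hb
  set c := (h i j : A) * (h j l : A) * (h l i : A) - 1 with hc
  have hIa := hs i j k
  have hIb := hs i k l
  have hIc := hs i j l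
  have hab : a * b = 0 := hI _ _ hIa hIb
  have hac : a * c = 0 := hI _ _ hIa hIc
  have hbc : b * c = 0 := hI _ _ hIb hIc
  have hcc : c * c = 0 := hI _ _ hIc hIc
  -- the key identity among units
  have hu : (h i j * h j k * h k l * h l j * (h i j)⁻¹) * (h i j * h j l * h l i)
      = (h i j * h j k * h k i) * (h i k * h k l * h l i) := by
    rw [← hinv j l, ← hinv i k, ← hinv i l]
    group
  set Q : A := (h i j : A) * (h j k : A) * (h k l : A) * (h l j : A) * ((h i j)⁻¹ : Aˣ)
    with hQdef
  have h1a : (1 : A) + a = (h i j : A) * (h j k : A) * (h k i : A) := by rw [ha]; abel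
  have h1b : (1 : A) + b = (h i k : A) * (h k l : A) * (h l i : A) := by rw [hb]; abel
  have h1c : (1 : A) + c = (h i j : A) * (h j l : A) * (h l i : A) := by rw [hc]; abel
  have hQ : Q * (1 + c) = (1 + a) * (1 + b) := by
    have hu' := congrArg (Units.val) hu
    push_cast at hu'
    rw [hQdef, h1a, h1b, h1c]
    exact hu'
  have h1cc : ((1 : A) + c) * (1 - c) = 1 := by
    have e : ((1 : A) + c) * (1 - c) = 1 - c * c := by noncomm_ring
    rw [e, hcc, sub_zero]
  have hQval : Q = (1 + a) * (1 + b) * (1 - c) := by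
    calc Q = Q * ((1 + c) * (1 - c)) := by rw [h1cc, mul_one]
    _ = (Q * (1 + c)) * (1 - c) := (mul_assoc Q _ _).symm
    _ = (1 + a) * (1 + b) * (1 - c) := by rw [hQ]
  have hQ2 : Q = 1 + a + b - c := by
    rw [hQval]
    have e : ((1 : A) + a) * (1 + b) * (1 - c)
        = 1 + a + b - c + (a * b - a * c - b * c - a * b * c) := by noncomm_ring
    rw [e, hab, hac, hbc]
    simp
  have ht : (h i j : A) * ((h j k : A) * (h k l : A) * (h l j : A) - 1) * ((h i j)⁻¹ : Aˣ)
      = Q - 1 := by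
    have e : (h i j : A) * ((h j k : A) * (h k l : A) * (h l j : A) - 1) * ((h i j)⁻¹ : Aˣ)
        = Q - (h i j : A) * ((h i j)⁻¹ : Aˣ) := by rw [hQdef]; noncomm_ring
    rw [e, Units.mul_inv]
  rw [ht, hQ2]
  abel
end

section
/- Let A be a (not necessarily commutative) unital ring and let I be a two-sided ideal of A which is square-zero, i.e. a*b = 0 for all a, b ∈ I. Let ι be a type and let h, h' : ι → ι → Aˣ be two families of units of A satisfying (h i j)*(h j i) = 1 and (h' i j)*(h' j i) = 1 for all i, j ∈ ι. Assume that for all i, j, k ∈ ι the element s i j k := (h i j)*(h j k)*(h k i) − 1 belongs to I, and that for all i, j ∈ ι the element u i j := (h' i j)*(h i j)⁻¹ − 1 belongs to I. Define s' i j k := (h' i j)*(h' j k)*(h' k i) − 1. Then for all i, j, k ∈ ι one has in A: s' i j k − s i j k = u i j + (h i j)*(u j k)*(h i j)⁻¹ − u i k; in other words, the cocycles s and s' differ by the twisted Čech coboundary of u. -/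
/-- Purely algebraic core computation. -/
lemma obstruction_key {A : Type*} [Ring A] (P Pi Q Ri a b c σ : A)
    (hPi : Pi * P = 1)
    (hσ : P * Q * Ri = 1 + σ)
    (zaσ : a * σ = 0) (zbσ : P * b * Pi * σ = 0)
    (zab : a * (P * b * Pi) = 0)
    (zσc : σ * c = 0) (zac : a * c = 0) (zbc : P * b * Pi * c = 0) :
    (1 + a) * P * ((1 + b) * Q) * (Ri * (1 - c)) - (P * Q * Ri)
      = a + P * b * Pi - c := by
  have hPbQR : P * b * Q * Ri = P * b * Pi + P * b * Pi * σ := by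
    have h1 : P * b * Q * Ri = P * b * Pi * (P * Q * Ri) := by
      calc P * b * Q * Ri = P * b * (Pi * P) * Q * Ri := by rw [hPi, mul_one]
        _ = P * b * Pi * (P * Q * Ri) := by noncomm_ring
    rw [h1, hσ, mul_add, mul_one]
  have haQR : a * (P * Q * Ri) = a := by
    rw [hσ, mul_add, mul_one, zaσ, add_zero]
  have hQRc : P * Q * Ri * c = c := by
    rw [hσ, add_mul, one_mul, zσc, add_zero]
  calc (1 + a) * P * ((1 + b) * Q) * (Ri * (1 - c)) - (P * Q * Ri)
      = (P * Q * Ri) + a * (P * Q * Ri) + (P * b * Q * Ri) + a * (P * b * Q * Ri)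
        - (P * Q * Ri * c) - a * (P * Q * Ri * c) - (P * b * Q * Ri) * c
        - a * ((P * b * Q * Ri) * c) - (P * Q * Ri) := by noncomm_ring
    _ = a + P * b * Pi - c := by
        rw [hPbQR, haQR, hQRc, zbσ, add_zero, zab, zac]
        simp only [zbc, mul_zero, sub_zero]
        abel

/-- Two lifts of a cocycle along a square-zero extension give obstruction cocycles
that differ by the twisted Čech coboundary of `u i j = h' i j * (h i j)⁻¹ - 1`. -/
theorem obstruction_cocycles_cohomologous
    {A : Type*} [Ring A] (I : TwoSidedIdeal A)
    (hI : ∀ a b : A, a ∈ I → b ∈ I → a * b = 0)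
    {ι : Type*} (h h' : ι → ι → Aˣ)
    (hsym : ∀ i j, h i j * h j i = 1)
    (hsym' : ∀ i j, h' i j * h' j i = 1)
    (hs : ∀ i j k, ((h i j : A) * (h j k : A) * (h k i : A) - 1) ∈ I)
    (hu : ∀ i j, ((h' i j : A) * ((h i j)⁻¹ : Aˣ) - 1) ∈ I) :
    ∀ i j k : ι,
      ((h' i j : A) * (h' j k : A) * (h' k i : A) - 1)
          - ((h i j : A) * (h j k : A) * (h k i : A) - 1)
        = ((h' i j : A) * ((h i j)⁻¹ : Aˣ) - 1)
            + (h i j : A) * ((h' j k : A) * ((h j k)⁻¹ : Aˣ) - 1) * ((h i j)⁻¹ : Aˣ)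
            - ((h' i k : A) * ((h i k)⁻¹ : Aˣ) - 1) := by
  intro i j k
  set P : A := (h i j : A) with hP
  set Pi : A := (((h i j)⁻¹ : Aˣ) : A) with hPidef
  set Q : A := (h j k : A) with hQ
  set Qi : A := (((h j k)⁻¹ : Aˣ) : A) with hQidef
  set R : A := (h i k : A) with hR
  set Ri : A := (((h i k)⁻¹ : Aˣ) : A) with hRidef
  set a : A := (h' i j : A) * Pi - 1 with ha
  set b : A := (h' j k : A) * Qi - 1 with hb
  set c : A := (h' i k : A) * Ri - 1 with hc
  have hPiP : Pi * P = 1 := Units.inv_mul _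
  have hPPi : P * Pi = 1 := Units.mul_inv _
  have hQiQ : Qi * Q = 1 := Units.inv_mul _
  have hRRi : R * Ri = 1 := Units.mul_inv _
  have hRiR : Ri * R = 1 := Units.inv_mul _
  -- h k i = (h i k)⁻¹
  have hki : (h k i : A) = Ri := by
    rw [hRidef]
    exact congrArg Units.val (eq_inv_of_mul_eq_one_right (hsym i k))
  -- lift decompositions
  have h'ij : (h' i j : A) = (1 + a) * P := by
    have : (1 : A) + a = (h' i j : A) * Pi := by rw [ha]; abel
    rw [this, mul_assoc, hPiP, mul_one]
  have h'jk : (h' j k : A) = (1 + b) * Q := by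
    have : (1 : A) + b = (h' j k : A) * Qi := by rw [hb]; abel
    rw [this, mul_assoc, hQiQ, mul_one]
  have h'ik : (h' i k : A) = (1 + c) * R := by
    have : (1 : A) + c = (h' i k : A) * Ri := by rw [hc]; abel
    rw [this, mul_assoc, hRiR, mul_one]
  -- memberships
  have hamem : a ∈ I := hu i j
  have hbmem : b ∈ I := hu j k
  have hcmem : c ∈ I := hu i k
  have hσmem : P * Q * Ri - 1 ∈ I := by
    have := hs i j k
    rwa [hki] at this
  have hPbPimem : P * b * Pi ∈ I :=
    I.mul_mem_right _ _ (I.mul_mem_left _ _ hbmem)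
  -- h' k i = Ri * (1 - c)
  have hcc : c * c = 0 := hI _ _ hcmem hcmem
  have h'ki : (h' k i : A) = Ri * (1 - c) := by
    have inv1 : (h' i k : A) * (Ri * (1 - c)) = 1 := by
      rw [h'ik]
      calc (1 + c) * R * (Ri * (1 - c)) = (1 + c) * (R * Ri) * (1 - c) := by noncomm_ring
        _ = (1 + c) * (1 - c) := by rw [hRRi, mul_one]
        _ = 1 - c * c := by noncomm_ring
        _ = 1 := by rw [hcc, sub_zero]
    have hki' : (h' k i : A) * (h' i k : A) = 1 := by
      have := congrArg (Units.val) (hsym' k i)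
      simpa using this
    calc (h' k i : A) = (h' k i : A) * ((h' i k : A) * (Ri * (1 - c))) := by
          rw [inv1, mul_one]
      _ = ((h' k i : A) * (h' i k : A)) * (Ri * (1 - c)) := by rw [mul_assoc]
      _ = Ri * (1 - c) := by rw [hki', one_mul]
  -- apply the key lemma
  have key := obstruction_key P Pi Q Ri a b c (P * Q * Ri - 1) hPiP
    (by abel)
    (hI _ _ hamem hσmem)
    (hI _ _ hPbPimem hσmem)
    (hI _ _ hamem hPbPimem)
    (hI _ _ hσmem hcmem)
    (hI _ _ hamem hcmem)
    (hI _ _ hPbPimem hcmem)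
  rw [hki, h'ki, h'ij, h'jk]
  calc (1 + a) * P * ((1 + b) * Q) * (Ri * (1 - c)) - 1 - (P * Q * Ri - 1)
      = (1 + a) * P * ((1 + b) * Q) * (Ri * (1 - c)) - (P * Q * Ri) := by abel
    _ = a + P * b * Pi - c := key
    _ = a + P * b * Pi - c := rfl
end

section
/- Let l ≥ 2 be a natural number and write λ := l − 1 for the last index of Fin l. Let α : Fin l → ℕ, let I : Fin l → Set ℝ be a family of nonempty sets of real numbers, and let ε > 0 and C > 0 be real numbers. Suppose that for all θ : Fin l → ℝ with θ j ∈ I j for every j, and for all r : Fin l → ℝ satisfying 0 < r j < ε for every j ≠ λ and ε/2 ≤ r λ < ε, one has Real.exp (Real.cos (∑ j, (α j : ℝ) * θ j) / ∏ j, (r j)^(α j)) ≤ C * ∏ j ≠ λ, (r j). Then: (a) α j ≥ 1 for every j ≠ λ, and (b) Real.cos (∑ j, (α j : ℝ) * θ j) < 0 for every θ with θ j ∈ I j for every j. -/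
/-- If `exp (cos (∑ j α j θ j) / ∏ j (r j)^(α j))` decays faster than
`∏_{j ≠ λ} r j` on a partial boundary polysector (the last radial variable staying
bounded away from `0`), then all exponents `α j`, `j ≠ λ`, are strictly positive
and `cos (∑ j α j θ j) < 0` on the whole angular domain. -/
theorem rapid_decay_forces_neg_cos
    (l : ℕ) (hl : 2 ≤ l) (lam : Fin l) (hlam : (lam : ℕ) = l - 1)
    (α : Fin l → ℕ) (I : Fin l → Set ℝ) (hI : ∀ j, (I j).Nonempty)
    (ε C : ℝ) (hε : 0 < ε) (hC : 0 < C)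
    (H : ∀ θ : Fin l → ℝ, (∀ j, θ j ∈ I j) →
      ∀ r : Fin l → ℝ, (∀ j, j ≠ lam → 0 < r j ∧ r j < ε) →
        ε / 2 ≤ r lam → r lam < ε →
        Real.exp (Real.cos (∑ j, (α j : ℝ) * θ j) / ∏ j, (r j) ^ (α j))
          ≤ C * ∏ j ∈ Finset.univ.erase lam, r j) :
    (∀ j, j ≠ lam → 1 ≤ α j) ∧
      ∀ θ : Fin l → ℝ, (∀ j, θ j ∈ I j) →
        Real.cos (∑ j, (α j : ℝ) * θ j) < 0 := by
  have hε2 : (0:ℝ) < ε/2 := by linarith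
  constructor
  · intro j0 hj0
    by_contra hα
    push_neg at hα
    have hα0 : α j0 = 0 := by omega
    have hθ : ∀ j, (fun j => (hI j).some) j ∈ I j := fun j => (hI j).some_mem
    set θ : Fin l → ℝ := fun j => (hI j).some with hθdef
    set c := Real.cos (∑ j, (α j : ℝ) * θ j) with hcdef
    set n := ((Finset.univ.erase lam).erase j0).card with hndef
    set A := Real.exp (c / ∏ j, ((ε/2):ℝ) ^ α j) with hAdef
    have hA : (0:ℝ) < A := Real.exp_pos _
    have hpow : (0:ℝ) < (ε/2)^n := pow_pos hε2 n
    set t := min (ε/2) (A / (2 * C * (ε/2)^n)) with htdef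
    have ht0 : 0 < t := lt_min hε2 (by positivity)
    have htε : t < ε := lt_of_le_of_lt (min_le_left _ _) (by linarith)
    set r : Fin l → ℝ := fun j => if j = j0 then t else ε/2 with hrdef
    have hrlam : r lam = ε/2 := by
      simp only [hrdef]
      exact if_neg (fun h => hj0 h.symm)
    have key := H θ hθ r (fun j hj => by
        by_cases h : j = j0
        · simp only [hrdef, h, if_pos rfl]; exact ⟨ht0, htε⟩
        · simp only [hrdef, if_neg h]; exact ⟨hε2, by linarith⟩)
      (by rw [hrlam]) (by rw [hrlam]; linarith)
    have hprod1 : ∏ j, (r j) ^ α j = ∏ j, ((ε/2):ℝ) ^ α j := by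
      apply Finset.prod_congr rfl
      intro j _
      by_cases h : j = j0
      · subst h; simp [hrdef, hα0]
      · simp [hrdef, h]
    have hj0mem : j0 ∈ Finset.univ.erase lam :=
      Finset.mem_erase.mpr ⟨hj0, Finset.mem_univ _⟩
    have hprod2 : ∏ j ∈ Finset.univ.erase lam, r j = t * (ε/2)^n := by
      rw [← Finset.mul_prod_erase _ _ hj0mem]
      congr 1
      · simp [hrdef]
      · rw [Finset.prod_congr rfl (fun j hj => ?_), Finset.prod_const]
        simp [hrdef, (Finset.mem_erase.mp hj).1]
    rw [hprod1, hprod2] at key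
    have ht2 : t ≤ A / (2 * C * (ε/2)^n) := min_le_right _ _
    rw [le_div_iff₀ (by positivity)] at ht2
    nlinarith [key, hA]
  · intro θ hθ
    by_contra hc
    push_neg at hc
    set c := Real.cos (∑ j, (α j : ℝ) * θ j) with hcdef
    set t := min (ε/2) (min 1 (1/(2*C))) with htdef
    have ht0 : 0 < t := lt_min hε2 (lt_min one_pos (by positivity))
    have ht1 : t ≤ 1 := le_trans (min_le_right _ _) (min_le_left _ _)
    have htC : t ≤ 1/(2*C) := le_trans (min_le_right _ _) (min_le_right _ _)
    have htε : t < ε := lt_of_le_of_lt (min_le_left _ _) (by linarith)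
    set r : Fin l → ℝ := fun j => if j = lam then ε/2 else t with hrdef
    have hrlam : r lam = ε/2 := by simp [hrdef]
    have key := H θ hθ r (fun j hj => by
        simp only [hrdef, if_neg hj]; exact ⟨ht0, htε⟩)
      (by rw [hrlam]) (by rw [hrlam]; linarith)
    set m := (Finset.univ.erase lam).card with hmdef
    have hm : m = l - 1 := by
      rw [hmdef, Finset.card_erase_of_mem (Finset.mem_univ _), Finset.card_univ,
        Fintype.card_fin]
    have hprod2 : ∏ j ∈ Finset.univ.erase lam, r j = t ^ m := by
      rw [Finset.prod_congr rfl (fun j hj => ?_), Finset.prod_const]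
      simp [hrdef, (Finset.mem_erase.mp hj).1]
    rw [hprod2] at key
    have hP : 0 < ∏ j, (r j) ^ α j := by
      apply Finset.prod_pos
      intro j _
      apply pow_pos
      by_cases h : j = lam
      · simpa [hrdef, h] using hε2
      · simpa [hrdef, h] using ht0
    have h1 : (1:ℝ) ≤ Real.exp (c / ∏ j, (r j)^(α j)) :=
      Real.one_le_exp (div_nonneg hc hP.le)
    have hpw : t ^ m ≤ t := pow_le_of_le_one ht0.le ht1 (by omega)
    have htC' : C * t ≤ 1/2 := by
      rw [le_div_iff₀ (by positivity)] at htC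
      nlinarith
    nlinarith [key, h1, hpw, hC]
end

section
/- Let l ≥ 2 be a natural number and write λ := l − 1 for the last index of Fin l. Let α : Fin l → ℕ with α λ ≥ 1, let I : Fin l → Set ℝ, and let ε > 0 and C > 0 be real numbers. Suppose that for all θ : Fin l → ℝ with θ j ∈ I j for every j, and for all r : Fin l → ℝ satisfying 0 < r j < ε for every j ≠ λ and ε/2 ≤ r λ < ε, one has Real.exp (Real.cos (∑ j, (α j : ℝ) * θ j) / ∏ j, (r j)^(α j)) ≤ C * ∏ j ≠ λ, (r j). Let K : Fin l → Set ℝ be a family of nonempty compact subsets with K j ⊆ I j for every j. Then for every N : Fin l → ℕ there exists a constant C' > 0 such that for all θ with θ j ∈ K j for every j and all r : Fin l → ℝ with 0 < r j ≤ ε/2 for every j, one has Real.exp (Real.cos (∑ j, (α j : ℝ) * θ j) / ∏ j, (r j)^(α j)) ≤ C' * ∏ j, (r j)^(N j). -/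
/-- Rapid decay on a partial boundary polysector (only the last radial variable
bounded away from `0`) implies, after shrinking the angular sector to compact
subsets, rapid decay in all radial variables. -/
theorem rapid_decay_partial_implies_full
    (l : ℕ) (hl : 2 ≤ l) (lam : Fin l) (hlam : (lam : ℕ) = l - 1)
    (α : Fin l → ℕ) (hαlam : 1 ≤ α lam)
    (I : Fin l → Set ℝ) (ε C : ℝ) (hε : 0 < ε) (hC : 0 < C)
    (H : ∀ θ : Fin l → ℝ, (∀ j, θ j ∈ I j) →
      ∀ r : Fin l → ℝ, (∀ j, j ≠ lam → 0 < r j ∧ r j < ε) →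
        ε / 2 ≤ r lam → r lam < ε →
        Real.exp (Real.cos (∑ j, (α j : ℝ) * θ j) / ∏ j, (r j) ^ (α j))
          ≤ C * ∏ j ∈ Finset.univ.erase lam, r j)
    (K : Fin l → Set ℝ) (hKne : ∀ j, (K j).Nonempty)
    (hKcompact : ∀ j, IsCompact (K j)) (hKI : ∀ j, K j ⊆ I j) :
    ∀ N : Fin l → ℕ, ∃ C' : ℝ, 0 < C' ∧
      ∀ θ : Fin l → ℝ, (∀ j, θ j ∈ K j) →
        ∀ r : Fin l → ℝ, (∀ j, 0 < r j) → (∀ j, r j ≤ ε / 2) →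
          Real.exp (Real.cos (∑ j, (α j : ℝ) * θ j) / ∏ j, (r j) ^ (α j))
            ≤ C' * ∏ j, (r j) ^ (N j) := by
  intro N
  have hε2 : (0:ℝ) < ε / 2 := by linarith
  choose θ₀ hθ₀ using hKne
  have hθ₀I : ∀ j, θ₀ j ∈ I j := fun j => hKI j (hθ₀ j)
  -- Step B : every exponent is at least 1
  have hα : ∀ j, 1 ≤ α j := by
    intro j
    by_cases hj : j = lam
    · exact hj ▸ hαlam
    · by_contra h
      have hαj : α j = 0 := by omega
      set A : ℝ := ∏ _k ∈ (Finset.univ.erase lam).erase j, (ε/2 : ℝ) with hA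
      have hApos : 0 < A := Finset.prod_pos (fun _ _ => hε2)
      set P : ℝ := ∏ k, (ε/2 : ℝ) ^ α k with hP
      set L : ℝ := Real.exp (Real.cos (∑ k, (α k : ℝ) * θ₀ k) / P) with hL
      have hLpos : 0 < L := Real.exp_pos _
      set t : ℝ := min (ε/2) (L / (2 * C * A)) with ht
      have htpos : 0 < t := lt_min hε2 (by positivity)
      have htε2 : t ≤ ε / 2 := min_le_left _ _
      set r : Fin l → ℝ := fun k => if k = j then t else ε/2 with hr
      have hcond : ∀ k, k ≠ lam → 0 < r k ∧ r k < ε := by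
        intro k _
        by_cases hk : k = j
        · simp only [hr, if_pos hk]; exact ⟨htpos, by linarith⟩
        · simp only [hr, if_neg hk]; exact ⟨hε2, by linarith⟩
      have hrlam : r lam = ε / 2 := by
        have hlj : lam ≠ j := fun hh => hj hh.symm
        simp [hr, hlj]
      have h1 := H θ₀ hθ₀I r hcond (le_of_eq hrlam.symm) (by rw [hrlam]; linarith)
      have hPeq : (∏ k, (r k) ^ (α k)) = P := by
        refine Finset.prod_congr rfl fun k _ => ?_
        by_cases hk : k = j
        · subst hk; simp [hr, hαj]
        · simp [hr, hk]
      have hprod : (∏ k ∈ Finset.univ.erase lam, r k) = t * A := by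
        have hjmem : j ∈ Finset.univ.erase lam := Finset.mem_erase.2 ⟨hj, Finset.mem_univ j⟩
        rw [← Finset.mul_prod_erase _ _ hjmem]
        congr 1
        · simp [hr]
        · refine Finset.prod_congr rfl fun k hk => ?_
          have : k ≠ j := (Finset.mem_erase.1 hk).1
          simp [hr, this]
      rw [hPeq, hprod] at h1
      have ht2 : t ≤ L / (2 * C * A) := min_le_right _ _
      have : C * (t * A) ≤ L / 2 := by
        have := mul_le_mul_of_nonneg_left ht2 (le_of_lt (by positivity : (0:ℝ) < C * A))
        calc C * (t * A) = (C * A) * t := by ring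
          _ ≤ (C * A) * (L / (2 * C * A)) := this
          _ = L / 2 := by field_simp
      have : L ≤ L / 2 := le_trans h1 this
      linarith
  -- Step A : the cosine is negative on I
  have hcosneg : ∀ θ : Fin l → ℝ, (∀ j, θ j ∈ I j) →
      Real.cos (∑ j, (α j : ℝ) * θ j) < 0 := by
    intro θ hθ
    by_contra h
    push_neg at h
    set t : ℝ := min (ε/2) (min 1 (1 / (2 * C))) with ht
    have htpos : 0 < t := lt_min hε2 (lt_min one_pos (by positivity))
    have ht1 : t ≤ 1 := le_trans (min_le_right _ _) (min_le_left _ _)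
    have htC : t ≤ 1 / (2 * C) := le_trans (min_le_right _ _) (min_le_right _ _)
    set r : Fin l → ℝ := fun k => if k = lam then ε/2 else t with hr
    have hcond : ∀ k, k ≠ lam → 0 < r k ∧ r k < ε := by
      intro k hk
      simp only [hr, if_neg hk]
      exact ⟨htpos, lt_of_le_of_lt (min_le_left _ _) (by linarith)⟩
    have hrlam : r lam = ε / 2 := by simp [hr]
    have h1 := H θ hθ r hcond (le_of_eq hrlam.symm) (by rw [hrlam]; linarith)
    have hPpos : 0 < ∏ k, (r k) ^ (α k) := by
      refine Finset.prod_pos fun k _ => ?_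
      refine pow_pos ?_ _
      by_cases hk : k = lam
      · simp only [hr, if_pos hk]; exact hε2
      · simp only [hr, if_neg hk]; exact htpos
    have hexp1 : (1:ℝ) ≤ Real.exp (Real.cos (∑ j, (α j : ℝ) * θ j) / ∏ k, (r k) ^ (α k)) := by
      rw [Real.one_le_exp_iff]
      exact div_nonneg h hPpos.le
    have hcard : (Finset.univ.erase lam).card = l - 1 := by
      rw [Finset.card_erase_of_mem (Finset.mem_univ _), Finset.card_univ, Fintype.card_fin]
    have hprod : (∏ k ∈ Finset.univ.erase lam, r k) = t ^ (l - 1) := by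
      rw [← hcard, ← Finset.prod_const]
      refine Finset.prod_congr rfl fun k hk => ?_
      simp [hr, (Finset.mem_erase.1 hk).1]
    rw [hprod] at h1
    have hl1 : 1 ≤ l - 1 := by omega
    have htpow : t ^ (l - 1) ≤ t := by
      calc t ^ (l - 1) ≤ t ^ 1 := pow_le_pow_of_le_one htpos.le ht1 hl1
        _ = t := pow_one t
    have : (1:ℝ) ≤ C * t := le_trans hexp1 (le_trans h1
      (mul_le_mul_of_nonneg_left htpow hC.le))
    have : C * t ≤ C * (1 / (2 * C)) := mul_le_mul_of_nonneg_left htC hC.le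
    have hhalf : C * (1 / (2 * C)) = 1 / 2 := by field_simp
    linarith
  -- Step 2 : uniform negativity on compact K
  set f : (Fin l → ℝ) → ℝ := fun θ => Real.cos (∑ j, (α j : ℝ) * θ j) with hf
  have hfc : Continuous f := by
    apply Real.continuous_cos.comp
    exact continuous_finset_sum _ fun j _ => continuous_const.mul (continuous_apply j)
  have hScomp : IsCompact (Set.univ.pi K) := isCompact_univ_pi hKcompact
  have hSne : (Set.univ.pi K).Nonempty := ⟨θ₀, fun j _ => hθ₀ j⟩
  obtain ⟨θm, hθmS, hθm⟩ := hScomp.exists_isMaxOn hSne hfc.continuousOn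
  set δ : ℝ := -(f θm) with hδ
  have hδpos : 0 < δ := by
    have : f θm < 0 := hcosneg θm (fun j => hKI j (hθmS j (Set.mem_univ j)))
    linarith
  have hbound : ∀ θ : Fin l → ℝ, (∀ j, θ j ∈ K j) → f θ ≤ -δ := by
    intro θ hθ
    have := hθm (fun j _ => hθ j : θ ∈ Set.univ.pi K)
    simp only [hδ, neg_neg]
    exact this
  -- Step 3 : construct the constant
  set M : ℕ := ∑ j, N j with hM
  have hNM : ∀ j, N j ≤ α j * M := by
    intro j
    have h1 : N j ≤ M := Finset.single_le_sum (fun k _ => Nat.zero_le _) (Finset.mem_univ j)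
    calc N j ≤ M := h1
      _ = 1 * M := (one_mul M).symm
      _ ≤ α j * M := Nat.mul_le_mul_right _ (hα j)
  refine ⟨((M.factorial : ℝ) / δ ^ M) * ∏ j, (ε/2 : ℝ) ^ (α j * M - N j),
    mul_pos (div_pos (by exact_mod_cast M.factorial_pos) (pow_pos hδpos _))
      (Finset.prod_pos fun j _ => pow_pos hε2 _), ?_⟩
  intro θ hθ r hr0 hr2
  have hPpos : 0 < ∏ j, (r j) ^ (α j) := Finset.prod_pos fun j _ => pow_pos (hr0 j) _
  set P : ℝ := ∏ j, (r j) ^ (α j) with hP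
  have hcos : Real.cos (∑ j, (α j : ℝ) * θ j) ≤ -δ := hbound θ hθ
  have step1 : Real.exp (Real.cos (∑ j, (α j : ℝ) * θ j) / P) ≤ Real.exp (-δ / P) :=
    Real.exp_le_exp.2 ((div_le_div_iff_of_pos_right hPpos).2 hcos)
  have step2 : Real.exp (-δ / P) ≤ (M.factorial : ℝ) * P ^ M / δ ^ M := by
    have hx : (0:ℝ) ≤ δ / P := by positivity
    have h1 : (δ / P) ^ M / (M.factorial : ℝ) ≤ Real.exp (δ / P) :=
      Real.pow_div_factorial_le_exp (x := δ / P) hx M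
    have h2 : (0:ℝ) < (δ / P) ^ M / (M.factorial : ℝ) := by positivity
    have h3 : Real.exp (-δ / P) = (Real.exp (δ / P))⁻¹ := by
      rw [← Real.exp_neg]; ring_nf
    rw [h3]
    have h4 : (Real.exp (δ / P))⁻¹ ≤ ((δ / P) ^ M / (M.factorial : ℝ))⁻¹ :=
      inv_anti₀ h2 h1
    refine le_trans h4 (le_of_eq ?_)
    rw [div_pow]
    have hδM : (0:ℝ) < δ ^ M := pow_pos hδpos _
    have hPM : (0:ℝ) < P ^ M := pow_pos hPpos _
    have hfac : (0:ℝ) < (M.factorial : ℝ) := by positivity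
    field_simp
  have step3 : P ^ M = (∏ j, (r j) ^ (N j)) * ∏ j, (r j) ^ (α j * M - N j) := by
    rw [hP, ← Finset.prod_pow, ← Finset.prod_mul_distrib]
    refine Finset.prod_congr rfl fun j _ => ?_
    rw [← pow_mul, ← pow_add]
    congr 1
    have := hNM j
    omega
  have step4 : (∏ j, (r j) ^ (α j * M - N j)) ≤ ∏ j, (ε/2 : ℝ) ^ (α j * M - N j) :=
    Finset.prod_le_prod (fun j _ => pow_nonneg (hr0 j).le _)
      (fun j _ => pow_le_pow_left₀ (hr0 j).le (hr2 j) _)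
  calc Real.exp (Real.cos (∑ j, (α j : ℝ) * θ j) / P)
      ≤ Real.exp (-δ / P) := step1
    _ ≤ (M.factorial : ℝ) * P ^ M / δ ^ M := step2
    _ = ((M.factorial : ℝ) / δ ^ M) * ((∏ j, (r j) ^ (N j)) * ∏ j, (r j) ^ (α j * M - N j)) := by
        rw [step3]; ring
    _ ≤ ((M.factorial : ℝ) / δ ^ M) * ((∏ j, (r j) ^ (N j)) * ∏ j, (ε/2 : ℝ) ^ (α j * M - N j)) := by
        refine mul_le_mul_of_nonneg_left ?_ (div_nonneg (Nat.cast_nonneg _) (pow_nonneg hδpos.le _))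
        exact mul_le_mul_of_nonneg_left step4 (Finset.prod_nonneg fun j _ => pow_nonneg (hr0 j).le _)
    _ = ((M.factorial : ℝ) / δ ^ M) * (∏ j, (ε/2 : ℝ) ^ (α j * M - N j)) * ∏ j, (r j) ^ (N j) := by
        ring
end
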